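/- Let $\kappa > 2$, $y > 0$, $\lambda \geq 2$, and let $t \in \mathbb{R}$ with $|t| \leq 1$, $x \in \mathbb{R}$ with $|x| \leq \lambda/2$. Then $\sum_{e \in \mathbb{Z}} |x + iy + t + e\lambda|^{-\kappa} \leq 3y^{-\kappa} + 2\zeta(\kappa/2)(2\lambda y)^{-\kappa/2}$. -/

import Mathlib

set_option maxHeartbeats 2000000


open Complex

/-- Lattice sum estimate: for `κ > 2`, `y > 0`, `λ ≥ 2`, `|t| ≤ 1`, `|x| ≤ λ/2`,
`∑_{e ∈ ℤ} |x + iy + t + eλ|^{-κ} ≤ 3 y^{-κ} + 2 ζ(κ/2) (2λy)^{-κ/2}`,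
where `ζ(κ/2) = ∑_{n ≥ 1} n^{-κ/2}`. -/
theorem sum_abs_rpow_le (κ y lam t x : ℝ) (hκ : 2 < κ) (hy : 0 < y) (hlam : 2 ≤ lam)
    (ht : |t| ≤ 1) (hx : |x| ≤ lam / 2) :
    (∑' e : ℤ, ‖(x : ℂ) + y * Complex.I + t + (e : ℂ) * lam‖ ^ (-κ)) ≤
      3 * y ^ (-κ) +
        2 * (∑' n : ℕ, ((n : ℝ) + 1) ^ (-(κ / 2))) * (2 * lam * y) ^ (-(κ / 2)) := by
  have hlam0 : (0:ℝ) < lam := by linarith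
  have hC0 : (0:ℝ) < 2 * lam * y := by positivity
  set C : ℝ := (2 * lam * y) ^ (-(κ / 2)) with hCdef
  have hCnn : 0 ≤ C := Real.rpow_nonneg hC0.le _
  set f : ℤ → ℝ := fun e => ‖(x : ℂ) + y * Complex.I + t + (e : ℂ) * lam‖ ^ (-κ)
    with hfdef
  set g : ℤ → ℝ := fun e =>
    if e.natAbs ≤ 1 then y ^ (-κ) else ((e.natAbs : ℝ) - 1) ^ (-(κ / 2)) * C with hgdef
  -- basic facts about |z|
  have habs : ∀ e : ℤ, y ≤ ‖(x : ℂ) + y * Complex.I + t + (e : ℂ) * lam‖ := by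
    intro e
    have := Complex.abs_im_le_norm ((x : ℂ) + y * Complex.I + t + (e : ℂ) * lam)
    simpa [abs_of_pos hy] using this
  have hfg : ∀ e : ℤ, f e ≤ g e := by
    intro e
    by_cases h1 : e.natAbs ≤ 1
    · simp only [hgdef, hfdef, h1, if_true]
      exact Real.rpow_le_rpow_of_nonpos hy (habs e) (by linarith)
    · simp only [hgdef, hfdef, h1, if_false]
      push_neg at h1
      set m : ℝ := (e.natAbs : ℝ) - 1 with hm
      have hm1 : 1 ≤ m := by
        have : (2:ℝ) ≤ (e.natAbs : ℝ) := by exact_mod_cast h1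
        simp only [hm]; linarith
      have hm0 : 0 < m := by linarith
      have habse : |(e:ℝ)| = (e.natAbs : ℝ) := by
        rw [Nat.cast_natAbs, Int.cast_abs]
      -- real part bound
      have hre : lam * m ≤ |x + t + (e:ℝ) * lam| := by
        have h2 : |(e:ℝ) * lam| - |x + t| ≤ |x + t + (e:ℝ)*lam| := by
          have := abs_sub_abs_le_abs_sub ((e:ℝ)*lam) (-(x+t))
          simp only [abs_neg, sub_neg_eq_add] at this
          calc |(e:ℝ)*lam| - |x+t| ≤ |(e:ℝ)*lam + (x+t)| := this
            _ = |x + t + (e:ℝ)*lam| := by ring_nf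
        have h3 : |(e:ℝ)*lam| = (e.natAbs : ℝ) * lam := by
          rw [abs_mul, habse, abs_of_pos hlam0]
        have h4 : |x + t| ≤ lam / 2 + 1 := (abs_add_le _ _).trans (by linarith)
        have : lam * m = (e.natAbs : ℝ) * lam - lam := by rw [hm]; ring
        rw [this]
        have := h2
        rw [h3] at this
        linarith
      -- |z|^2 ≥ m * (2 lam y)
      have hsq : m * (2 * lam * y) ≤
          ‖(x : ℂ) + y * Complex.I + t + (e : ℂ) * lam‖ ^ 2 := by
        rw [Complex.sq_norm, Complex.normSq_apply]
        have hrecomp : ((x : ℂ) + y * Complex.I + t + (e : ℂ) * lam).re = x + t + (e:ℝ)*lam := by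
          simp
        have himcomp : ((x : ℂ) + y * Complex.I + t + (e : ℂ) * lam).im = y := by simp
        rw [hrecomp, himcomp]
        set a := x + t + (e:ℝ)*lam with ha
        have h5 : lam * m ≤ |a| := hre
        nlinarith [sq_nonneg (|a| - y), _root_.sq_abs a, abs_nonneg a, hy.le]
      -- conclude
      have hzpos : 0 < ‖(x : ℂ) + y * Complex.I + t + (e : ℂ) * lam‖ :=
        lt_of_lt_of_le hy (habs e)
      have heq : ‖(x : ℂ) + y * Complex.I + t + (e : ℂ) * lam‖ ^ (-κ)
          = (‖(x : ℂ) + y * Complex.I + t + (e : ℂ) * lam‖ ^ 2) ^ (-(κ/2)) := by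
        rw [← Real.rpow_natCast (‖_‖) 2, ← Real.rpow_mul hzpos.le]
        congr 1
        push_cast; ring
      rw [heq, hCdef, ← Real.mul_rpow hm0.le hC0.le]
      exact Real.rpow_le_rpow_of_nonpos (by positivity) hsq (by linarith)
  have hfnn : ∀ e : ℤ, 0 ≤ f e := fun e => Real.rpow_nonneg (norm_nonneg _) _
  -- summability of the zeta-type series
  have hζ : Summable (fun n : ℕ => ((n : ℝ) + 1) ^ (-(κ / 2))) := by
    have h := Real.summable_nat_rpow (p := -(κ/2)) |>.mpr (by linarith)
    have := (summable_nat_add_iff 1).mpr h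
    simpa [add_comm] using this
  set Z : ℝ := ∑' n : ℕ, ((n : ℝ) + 1) ^ (-(κ / 2)) with hZ
  -- g on ℕ shifted by 2
  have hg2 : ∀ n : ℕ, g ((n : ℤ) + 2) = ((n : ℝ) + 1) ^ (-(κ/2)) * C := by
    intro n
    have : ((n : ℤ) + 2).natAbs = n + 2 := by omega
    simp only [hgdef, this]
    rw [if_neg (by omega)]
    push_cast; ring_nf
  have hgneg : ∀ n : ℤ, g (-n) = g n := by intro n; simp [hgdef]
  have hg2' : ∀ n : ℕ, g ((n + 2 : ℕ) : ℤ) = ((n : ℝ) + 1) ^ (-(κ/2)) * C := by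
    intro n
    rw [show ((n + 2 : ℕ) : ℤ) = (n : ℤ) + 2 by push_cast; ring]
    exact hg2 n
  -- summability of g on ℕ
  have hgnat : Summable (fun n : ℕ => g n) := by
    rw [← summable_nat_add_iff 2]
    have : (fun n : ℕ => g ((n + 2 : ℕ) : ℤ)) = fun n : ℕ => ((n : ℝ) + 1) ^ (-(κ/2)) * C :=
      funext hg2'
    rw [this]
    exact hζ.mul_right C
  have hgnegnat : Summable (fun n : ℕ => g (-(n:ℤ))) := by
    simpa [hgneg] using hgnat
  have hgsum : Summable g := Summable.of_nat_of_neg hgnat hgnegnat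
  have hfsum : Summable f := hgsum.of_nonneg_of_le hfnn hfg
  have hs1 : Summable (fun n : ℕ => g ((n + 1 : ℕ) : ℤ)) := (summable_nat_add_iff 1).mpr hgnat
  have h0 : g ((0:ℕ):ℤ) = y ^ (-κ) := by simp [hgdef]
  have h1 : g ((1:ℕ):ℤ) = y ^ (-κ) := by simp [hgdef]
  have h2 : (fun n : ℕ => g ((n + 1 + 1 : ℕ) : ℤ)) = fun n : ℕ => ((n : ℝ) + 1) ^ (-(κ/2)) * C := by
    funext n
    rw [show (n + 1 + 1 : ℕ) = n + 2 by ring]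
    exact hg2' n
  have htail : ∑' n : ℕ, g ((n + 1 : ℕ) : ℤ) = y ^ (-κ) + Z * C := by
    rw [Summable.tsum_eq_zero_add hs1]
    simp only [Nat.zero_add]
    rw [h1, h2, tsum_mul_right]
  have htsumnat : ∑' n : ℕ, g n = 2 * y ^ (-κ) + Z * C := by
    rw [Summable.tsum_eq_zero_add hgnat, h0, htail]
    ring
  have hrw : (fun n : ℕ => g (-((n:ℤ) + 1))) = fun n : ℕ => g ((n + 1 : ℕ) : ℤ) := by
    funext n
    rw [show ((n + 1 : ℕ) : ℤ) = (n:ℤ) + 1 by push_cast; ring, hgneg]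
  have hneg1 : Summable (fun n : ℕ => g (-((n:ℤ) + 1))) := by rw [hrw]; exact hs1
  have hgtsum : ∑' e : ℤ, g e = 3 * y ^ (-κ) + 2 * Z * C := by
    rw [tsum_of_nat_of_neg_add_one hgnat hneg1, htsumnat, hrw, htail]
    ring
  calc ∑' e : ℤ, f e ≤ ∑' e : ℤ, g e := Summable.tsum_le_tsum hfg hfsum hgsum
    _ = 3 * y ^ (-κ) + 2 * Z * C := hgtsum
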